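/- arXiv:2005.07187 — 3 statements merged into one kernel-verified Lean document; each statement's English description precedes it below -/
import Mathlib

section
/- Let P be a finite poset with n elements and let L be a labeling of P. For each i ∈ {1,…,n−1}, define the toggle τ_i on labelings of P as follows: if L⁻¹(i) <_P L⁻¹(i+1), then τ_i(L) = L; otherwise τ_i(L) is obtained from L by swapping the labels i and i+1 (i.e., τ_i(L)(x) = L(x) if L(x) ∉ {i,i+1}, τ_i(L)(x) = i+1 if L(x) = i, and τ_i(L)(x) = i if L(x) = i+1). Then ∂(L) = (τ_{n−1} ∘ ⋯ ∘ τ_2 ∘ τ_1)(L). -/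
open scoped Classical

noncomputable section

abbrev Labeling (P : Type*) [Fintype P] : Type _ := P ≃ Fin (Fintype.card P)

variable {P : Type*} [Fintype P] [PartialOrder P]

def IsLinearExt (L : Labeling P) : Prop := ∀ x y : P, x ≤ y → L x ≤ L y

def lSucc (L : Labeling P) (v : P)
    (h : (Finset.univ.filter fun y => v < y).Nonempty) : P :=
  L.symm (((Finset.univ.filter fun y => v < y).image L).min' (h.image _))

lemma lt_lSucc (L : Labeling P) (v : P)
    (h : (Finset.univ.filter fun y => v < y).Nonempty) : v < lSucc L v h := by
  have hmem := Finset.min'_mem ((Finset.univ.filter fun y => v < y).image L) (h.image _)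
  obtain ⟨y, hy, hLy⟩ := Finset.mem_image.mp hmem
  have heq : lSucc L v h = y := by
    unfold lSucc
    rw [← hLy, Equiv.symm_apply_apply]
  rw [heq]
  exact (Finset.mem_filter.mp hy).2

def promChainFrom (L : Labeling P) (v : P) : List P :=
  if h : (Finset.univ.filter fun y => v < y).Nonempty then
    v :: promChainFrom L (lSucc L v h)
  else [v]
termination_by (Finset.univ.filter fun y => v < y).card
decreasing_by
  apply Finset.card_lt_card
  refine (Finset.ssubset_iff_of_subset ?_).mpr ?_
  · intro z hz
    simp only [Finset.mem_filter, Finset.mem_univ, true_and] at *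
    exact lt_trans (lt_lSucc L v h) hz
  · exact ⟨lSucc L v h, by simp [lt_lSucc L v h], by simp⟩

def promote (L : Labeling P) : Labeling P :=
  if h : Nonempty P then
    ((List.formPerm (promChainFrom L (L.symm ⟨0, @Fintype.card_pos P _ h⟩))).trans L).trans
      (finRotate (Fintype.card P)).symm
  else L

/-- The label of `x` under `L`, as an integer in `{1, …, n}`. -/
def labelOf (L : Labeling P) (x : P) : ℕ := (L x : ℕ) + 1

/-- The largest `a ∈ {0, …, n}` such that for all `j ∈ {n−a+1, …, n}`, the set
`{x ∈ P : j ≤ L(x) ≤ n}` is an upper order ideal of `P`. -/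
def frozenA (L : Labeling P) : ℕ :=
  sSup {a : ℕ | a ≤ Fintype.card P ∧
    ∀ j, Fintype.card P - a + 1 ≤ j → j ≤ Fintype.card P →
      IsUpperSet {x : P | j ≤ labelOf L x ∧ labelOf L x ≤ Fintype.card P}}

/-- `x` is frozen with respect to `L` if `n − a + 1 ≤ L(x) ≤ n`, where `a` is as in `frozenA`. -/
def IsFrozen (L : Labeling P) (x : P) : Prop :=
  Fintype.card P - frozenA L + 1 ≤ labelOf L x

/-- A labeling of an `n`-element poset is tangled if `n ≥ 2` and `∂^{n−2}(L)` is
not a linear extension. -/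
def IsTangled (L : Labeling P) : Prop :=
  2 ≤ Fintype.card P ∧ ¬ IsLinearExt (promote^[Fintype.card P - 2] L)

/-- A labeling of an `n`-element poset is `k`-untangled if `n ≥ k + 2` and
`∂^{n−k−2}(L)` is not a linear extension. -/
def IsUntangled (k : ℕ) (L : Labeling P) : Prop :=
  k + 2 ≤ Fintype.card P ∧ ¬ IsLinearExt (promote^[Fintype.card P - k - 2] L)

/-- The comparability graph of a poset. -/
def compGraph (P : Type*) [PartialOrder P] : SimpleGraph P where
  Adj x y := x ≠ y ∧ (x ≤ y ∨ y ≤ x)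
  symm := by
    constructor
    intro x y hxy
    exact ⟨hxy.1.symm, hxy.2.symm⟩
  loopless := by
    constructor
    intro x hx
    exact hx.1 rfl

/-- The standardization of an injective map from a finite type into a linear order:
the unique relabeling by `{1, …, n}` with the same relative order of values. -/
def standardize {R β : Type*} [Fintype R] [LinearOrder β]
    (f : R → β) (hf : Function.Injective f) : R ≃ Fin (Fintype.card R) :=
  have hcard : (Finset.univ.image f).card = Fintype.card R := by
    rw [Finset.card_image_of_injective _ hf, Finset.card_univ]
  (Equiv.ofBijective (fun x => (⟨f x, by simp⟩ : ↥(Finset.univ.image f)))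
    (by
      rw [Fintype.bijective_iff_injective_and_card]
      refine ⟨fun a b hab => hf (congrArg Subtype.val hab), ?_⟩
      rw [Fintype.card_coe, hcard])).trans
    ((Finset.univ.image f).orderIsoOfFin hcard).symm.toEquiv

/-- The toggle operator `τ_{k+1}`: it swaps the labels `k+1` and `k+2` (i.e. the
`Fin`-labels `k` and `k+1`) unless `L⁻¹(k+1) <_P L⁻¹(k+2)`. -/
def toggle (L : Labeling P) (k : ℕ) : Labeling P :=
  if h : k + 1 < Fintype.card P then
    if L.symm ⟨k, Nat.lt_of_succ_lt h⟩ < L.symm ⟨k + 1, h⟩ then L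
    else L.trans (Equiv.swap ⟨k, Nat.lt_of_succ_lt h⟩ ⟨k + 1, h⟩)
  else L

/-- An element `x` is `L`-golden if every element strictly above it has a larger label. -/
def IsGolden (L : Labeling P) (x : P) : Prop := ∀ y : P, x < y → L x < L y

/-- The largest label `n` of an `n`-element poset, as an element of `Fin n`. -/
def topFin (P : Type*) [Fintype P] [Nonempty P] : Fin (Fintype.card P) :=
  ⟨Fintype.card P - 1, Nat.sub_lt Fintype.card_pos Nat.one_pos⟩

/-! ### Auxiliary material for Statement 0 -/

/-- The cyclic permutation `(0 → k, j → j-1 for 1 ≤ j ≤ k)` of `Fin n`, built as a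
product of adjacent swaps. -/
def toggleRho (n : ℕ) : ℕ → Equiv.Perm (Fin n)
  | 0 => 1
  | k + 1 =>
    if h : k + 1 < n then
      (toggleRho n k).trans (Equiv.swap ⟨k, Nat.lt_of_succ_lt h⟩ ⟨k + 1, h⟩)
    else toggleRho n k

lemma toggleRho_apply (n : ℕ) (k : ℕ) (hk : k < n) (j : Fin n) :
    toggleRho n k j =
      if (j : ℕ) = 0 then ⟨k, hk⟩
      else if (j : ℕ) ≤ k then ⟨(j : ℕ) - 1, Nat.lt_of_le_of_lt (Nat.sub_le _ _) j.isLt⟩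
      else j := by
  induction k with
  | zero =>
    simp only [toggleRho, Equiv.Perm.one_apply]
    split_ifs with h1 h2
    · exact Fin.ext h1
    · omega
    · rfl
  | succ k IH =>
    have hk' : k < n := Nat.lt_of_succ_lt hk
    simp only [toggleRho]
    rw [dif_pos hk, Equiv.trans_apply, IH hk']
    by_cases h1 : (j : ℕ) = 0
    · simp only [if_pos h1]
      have : (⟨k, hk'⟩ : Fin n) = ⟨k, Nat.lt_of_succ_lt hk⟩ := rfl
      rw [this, Equiv.swap_apply_left]
    · by_cases h2 : (j : ℕ) ≤ k
      · simp only [if_neg h1, if_pos h2, if_pos (show (j : ℕ) ≤ k + 1 by omega)]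
        exact Equiv.swap_apply_of_ne_of_ne (Fin.ne_of_val_ne (by simp; omega))
          (Fin.ne_of_val_ne (by simp; omega))
      · by_cases h3 : (j : ℕ) ≤ k + 1
        · have hj : (j : ℕ) = k + 1 := by omega
          simp only [if_neg h1, if_neg h2, if_pos h3]
          have hje : j = (⟨k + 1, hk⟩ : Fin n) := Fin.ext hj
          rw [hje, Equiv.swap_apply_right]
          exact Fin.ext (by simp [hj])
        · simp only [if_neg h1, if_neg h2, if_neg h3]
          exact Equiv.swap_apply_of_ne_of_ne (Fin.ne_of_val_ne (by simp; omega))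
            (Fin.ne_of_val_ne (by simp; omega))

lemma toggleRho_eq_finRotate_symm (n : ℕ) (hn : 0 < n) :
    toggleRho n (n - 1) = (finRotate n).symm := by
  obtain ⟨m, rfl⟩ : ∃ m, n = m + 1 := ⟨n - 1, by omega⟩
  refine Equiv.ext fun j => ?_
  rw [Equiv.eq_symm_apply, toggleRho_apply _ _ (by omega) j]
  split_ifs with h1 h2
  · have : (⟨m + 1 - 1, by omega⟩ : Fin (m + 1)) = Fin.last m := rfl
    rw [this, finRotate_succ_apply, Fin.last_add_one]
    exact (Fin.ext h1.symm : (0 : Fin (m + 1)) = j)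
  · rw [finRotate_succ_apply]
    apply Fin.ext
    rw [Fin.val_add]
    have hj1 : 1 ≤ (j : ℕ) := by omega
    have hm1 : 1 ≤ m := by
      have := j.isLt
      omega
    have hv1 : ((1 : Fin (m + 1)) : ℕ) = 1 := by
      simp [Nat.mod_eq_of_lt (by omega : 1 < m + 1)]
    simp only [hv1]
    have := j.isLt
    rw [Nat.mod_eq_of_lt (by omega)]
    omega
  · have := j.isLt
    omega

variable (L : Labeling P) in
lemma lSucc_le (v : P) (h : (Finset.univ.filter fun y => v < y).Nonempty)
    {y : P} (hy : v < y) : L (lSucc L v h) ≤ L y := by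
  unfold lSucc
  rw [Equiv.apply_symm_apply]
  exact Finset.min'_le _ _
    (Finset.mem_image_of_mem _ (Finset.mem_filter.mpr ⟨Finset.mem_univ y, hy⟩))

lemma promChainFrom_card_lt (L : Labeling P) (v : P)
    (h : (Finset.univ.filter fun y => v < y).Nonempty) :
    (Finset.univ.filter fun y => lSucc L v h < y).card <
      (Finset.univ.filter fun y => v < y).card := by
  apply Finset.card_lt_card
  refine (Finset.ssubset_iff_of_subset ?_).mpr ?_
  · intro z hz
    simp only [Finset.mem_filter, Finset.mem_univ, true_and] at *
    exact lt_trans (lt_lSucc L v h) hz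
  · exact ⟨lSucc L v h, by simp [lt_lSucc L v h], by simp⟩

lemma promChainFrom_aux (L : Labeling P) :
    ∀ (N : ℕ) (v : P), (Finset.univ.filter fun y => v < y).card ≤ N →
      (∃ t, promChainFrom L v = v :: t) ∧
      List.Chain' (fun a b => a < b ∧ ∀ y, a < y → L b ≤ L y) (promChainFrom L v) ∧
      (∀ x ∈ (promChainFrom L v).getLast?, ∀ y : P, ¬ x < y) := by
  intro N
  induction N with
  | zero =>
    intro v hv
    have hemp : ¬ (Finset.univ.filter fun y => v < y).Nonempty := fun hne =>
      absurd (Finset.card_pos.mpr hne) (by omega)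
    rw [promChainFrom, dif_neg hemp]
    refine ⟨⟨[], rfl⟩, List.isChain_singleton v, ?_⟩
    intro x hx y hlt
    simp only [List.getLast?_singleton, Option.mem_some_iff] at hx
    subst hx
    exact hemp ⟨y, Finset.mem_filter.mpr ⟨Finset.mem_univ y, hlt⟩⟩
  | succ N IH =>
    intro v hv
    by_cases hne : (Finset.univ.filter fun y => v < y).Nonempty
    · have hcard := promChainFrom_card_lt L v hne
      obtain ⟨⟨t, ht⟩, hch, hlast⟩ := IH (lSucc L v hne) (by omega)
      rw [promChainFrom, dif_pos hne]
      refine ⟨⟨_, rfl⟩, ?_, ?_⟩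
      · change List.IsChain _ _
        rw [List.isChain_cons]
        refine ⟨?_, hch⟩
        intro y hy
        rw [ht] at hy
        simp only [List.head?_cons, Option.mem_some_iff] at hy
        subst hy
        exact ⟨lt_lSucc L v hne, fun z hz => lSucc_le L v hne hz⟩
      · intro x hx y
        apply hlast x
        rw [ht] at hx ⊢
        rwa [List.getLast?_cons_cons] at hx
    · rw [promChainFrom, dif_neg hne]
      refine ⟨⟨[], rfl⟩, List.isChain_singleton v, ?_⟩
      intro x hx y hlt
      simp only [List.getLast?_singleton, Option.mem_some_iff] at hx
      subst hx
      exact hne ⟨y, Finset.mem_filter.mpr ⟨Finset.mem_univ y, hlt⟩⟩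

lemma promChainFrom_head (L : Labeling P) (v : P) :
    ∃ t, promChainFrom L v = v :: t :=
  (promChainFrom_aux L _ v le_rfl).1

lemma promChainFrom_chain' (L : Labeling P) (v : P) :
    List.Chain' (fun a b => a < b ∧ ∀ y, a < y → L b ≤ L y) (promChainFrom L v) :=
  (promChainFrom_aux L _ v le_rfl).2.1

lemma promChainFrom_getLast?_max (L : Labeling P) (v : P) :
    ∀ x ∈ (promChainFrom L v).getLast?, ∀ y : P, ¬ x < y :=
  (promChainFrom_aux L _ v le_rfl).2.2

/-- Extended promotion equals the composite of the toggles
`τ_{n-1} ∘ ⋯ ∘ τ_2 ∘ τ_1` (here `toggle L k` is the paper's `τ_{k+1}`, acting on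
the `Fin`-labels `k` and `k+1`, i.e. the paper's labels `k+1` and `k+2`). -/
theorem promotion_eq_toggle_composition (L : Labeling P) :
    promote L = (List.range (Fintype.card P - 1)).foldl toggle L := by
  rcases isEmpty_or_nonempty P with hP | hP
  · have h0 : Fintype.card P = 0 := Fintype.card_eq_zero
    simp only [promote, dif_neg (not_nonempty_iff.mpr hP)]
    rw [show Fintype.card P - 1 = 0 from by omega, List.range_zero, List.foldl_nil]
  · have hn : 0 < Fintype.card P := Fintype.card_pos
    obtain ⟨v1, hv1⟩ : ∃ v, L.symm ⟨0, @Fintype.card_pos P _ hP⟩ = v := ⟨_, rfl⟩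
    have hLv1 : L v1 = ⟨0, hn⟩ := by rw [← hv1, Equiv.apply_symm_apply]
    obtain ⟨Ct, hCt⟩ := promChainFrom_head L v1
    have hchain := promChainFrom_chain' L v1
    have hpair : List.Pairwise (· < ·) (promChainFrom L v1) :=
      List.isChain_iff_pairwise.mp (hchain.imp fun _ _ h => h.1)
    have hnodup : (promChainFrom L v1).Nodup := hpair.imp fun h => ne_of_lt h
    have hmax := promChainFrom_getLast?_max L v1
    have key : ∀ k, k ≤ Fintype.card P - 1 →
        ∃ C1 C2, promChainFrom L v1 = C1 ++ C2 ∧ C1 ≠ [] ∧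
          (∀ x ∈ C1, (L x : ℕ) ≤ k) ∧ (∀ x ∈ C2, k < (L x : ℕ)) ∧
          (List.range k).foldl toggle L =
            ((List.formPerm C1).trans L).trans (toggleRho (Fintype.card P) k) := by
      intro k
      induction k with
      | zero =>
        intro _
        refine ⟨[v1], Ct, hCt, by simp, ?_, ?_, ?_⟩
        · intro x hx
          rw [List.mem_singleton] at hx
          subst hx
          rw [hLv1]
        · intro x hx
          have hv1Ct : v1 ∉ Ct := (List.nodup_cons.mp (hCt ▸ hnodup)).1
          have hxne : x ≠ v1 := by rintro rfl; exact hv1Ct hx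
          have hne0 : L x ≠ ⟨0, hn⟩ := fun h =>
            hxne (L.injective (by rw [h, hLv1]))
          exact Nat.pos_of_ne_zero fun h0 => hne0 (Fin.ext h0)
        · refine Equiv.ext fun x => ?_
          simp [List.formPerm_singleton, toggleRho]
      | succ k IH =>
        intro hk1
        have hkn : k + 1 < Fintype.card P := by omega
        have hkn' : k < Fintype.card P := by omega
        obtain ⟨C1, C2, hsplit, hC1ne, hC1le, hC2gt, hM⟩ := IH (by omega)
        obtain ⟨x0, t1, ht1⟩ := List.exists_cons_of_ne_nil hC1ne
        have hx0 : v1 = x0 := by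
          have : v1 :: Ct = x0 :: (t1 ++ C2) := by
            rw [← hCt, hsplit, ht1, List.cons_append]
          exact ((List.cons.injEq _ _ _ _).mp this).1
        subst hx0
        subst ht1
        obtain ⟨w, hw⟩ : ∃ w, L.symm ⟨k + 1, hkn⟩ = w := ⟨_, rfl⟩
        have hLw : L w = ⟨k + 1, hkn⟩ := by rw [← hw, Equiv.apply_symm_apply]
        have hwC1 : w ∉ v1 :: t1 := fun hmem => by
          have := hC1le w hmem
          rw [hLw] at this
          simp at this
        obtain ⟨a, ha⟩ : ∃ a, (v1 :: t1).getLast (List.cons_ne_nil v1 t1) = a := ⟨_, rfl⟩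
        have hfpa : List.formPerm (v1 :: t1) a = v1 := by
          rw [← ha, List.formPerm_apply_getLast]
        have hNa : (((List.formPerm (v1 :: t1)).trans L).trans
            (toggleRho (Fintype.card P) k)) a = ⟨k, Nat.lt_of_succ_lt hkn⟩ := by
          simp only [Equiv.trans_apply]
          rw [hfpa, hLv1, toggleRho_apply _ k hkn']
          simp
        have hLwrho : toggleRho (Fintype.card P) k (L w) = ⟨k + 1, hkn⟩ := by
          rw [hLw, toggleRho_apply _ k hkn']
          rw [if_neg (by simp), if_neg (by simp)]
        have hNw : (((List.formPerm (v1 :: t1)).trans L).trans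
            (toggleRho (Fintype.card P) k)) w = ⟨k + 1, hkn⟩ := by
          simp only [Equiv.trans_apply]
          rw [List.formPerm_apply_of_notMem hwC1, hLwrho]
        have hrho1 : toggleRho (Fintype.card P) (k + 1) =
            (toggleRho (Fintype.card P) k).trans
              (Equiv.swap ⟨k, Nat.lt_of_succ_lt hkn⟩ ⟨k + 1, hkn⟩) := by
          simp only [toggleRho]
          rw [dif_pos hkn]
        rw [List.range_succ, List.foldl_append, List.foldl_cons, List.foldl_nil, hM]
        rw [toggle, dif_pos hkn]
        rw [show (((List.formPerm (v1 :: t1)).trans L).trans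
              (toggleRho (Fintype.card P) k)).symm ⟨k, Nat.lt_of_succ_lt hkn⟩ = a from
            by rw [Equiv.symm_apply_eq]; exact hNa.symm]
        rw [show (((List.formPerm (v1 :: t1)).trans L).trans
              (toggleRho (Fintype.card P) k)).symm ⟨k + 1, hkn⟩ = w from
            by rw [Equiv.symm_apply_eq]; exact hNw.symm]
        by_cases hcmp : a < w
        · rw [if_pos hcmp]
          have hC2ne : C2 ≠ [] := by
            rintro rfl
            have hC1eq : promChainFrom L v1 = v1 :: t1 := by
              rw [hsplit, List.append_nil]
            have hlast : (promChainFrom L v1).getLast? = some a := by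
              rw [hC1eq, List.getLast?_eq_getLast (List.cons_ne_nil v1 t1), ha]
            exact hmax a (by rw [hlast]; rfl) w hcmp
          obtain ⟨b, t2, rfl⟩ := List.exists_cons_of_ne_nil hC2ne
          have hR : a < b ∧ ∀ y, a < y → L b ≤ L y := by
            have hch2 := hsplit ▸ hchain
            refine (List.isChain_append.mp hch2).2.2 a ?_ b ?_
            · rw [List.getLast?_eq_getLast (List.cons_ne_nil v1 t1), ha]; rfl
            · rfl
          have hLb : L b = ⟨k + 1, hkn⟩ := by
            have h1 : (L b : ℕ) ≤ k + 1 := by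
              have h := hR.2 w hcmp
              rw [hLw] at h
              exact Fin.le_def.mp h
            have h2 : k < (L b : ℕ) := hC2gt b (List.mem_cons_self)
            have h3 : (L b : ℕ) = k + 1 := by omega
            exact Fin.ext (by rw [h3])
          have hbw : b = w := L.injective (by rw [hLb, hLw])
          rw [hbw] at hsplit hC2gt
          have hwt2 : w ∉ t2 := by
            have hnd2 : (w :: t2).Nodup := by
              have := hsplit ▸ hnodup
              exact ((List.nodup_append.mp this).2.1)
            exact (List.nodup_cons.mp hnd2).1
          refine ⟨(v1 :: t1) ++ [w], t2, ?_, by simp, ?_, ?_, ?_⟩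
          · rw [hsplit]
            simp
          · intro x hx
            rcases List.mem_append.mp hx with h | h
            · exact le_trans (hC1le x h) (by omega)
            · rw [List.mem_singleton] at h
              subst h
              rw [hLw]
          · intro x hx
            have h2 : k < (L x : ℕ) := hC2gt x (List.mem_cons_of_mem _ hx)
            have hne : (L x : ℕ) ≠ k + 1 := by
              intro he
              have : x = w := L.injective (by rw [hLw]; exact Fin.ext he)
              subst this
              exact hwt2 hx
            omega
          · refine Equiv.ext fun x => ?_
            rw [hrho1]
            simp only [Equiv.trans_apply]
            have hnodC1' : ((v1 :: t1) ++ [w]).Nodup := by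
              have heq : promChainFrom L v1 = ((v1 :: t1) ++ [w]) ++ t2 := by
                rw [hsplit]; simp
              exact (List.nodup_append.mp (heq ▸ hnodup)).1
            have hnodC1 : (v1 :: t1).Nodup := hnodC1'.of_append_left
            by_cases hxC : x ∈ (v1 :: t1) ++ [w]
            · obtain ⟨t, htlen, hxt⟩ := List.mem_iff_getElem.mp hxC
              have hlen : ((v1 :: t1) ++ [w]).length = t1.length + 2 := by simp
              by_cases hlt : t < t1.length + 1
              · have hfp' : List.formPerm ((v1 :: t1) ++ [w]) x =
                    ((v1 :: t1) ++ [w])[t + 1]'(by omega) := by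
                  rw [← hxt]
                  exact List.formPerm_apply_lt_getElem _ hnodC1' t (by omega)
                have hxg : x = (v1 :: t1)[t]'(by simpa using hlt) := by
                  rw [← hxt]
                  exact List.getElem_append_left (by simpa using hlt)
                by_cases hlt2 : t + 1 < t1.length + 1
                · have hg2 : ((v1 :: t1) ++ [w])[t + 1]'(by omega) =
                      (v1 :: t1)[t + 1]'(by simpa using hlt2) :=
                    List.getElem_append_left (by simpa using hlt2)
                  have hfp : List.formPerm (v1 :: t1) x =
                      (v1 :: t1)[t + 1]'(by simpa using hlt2) := by
                    rw [hxg]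
                    exact List.formPerm_apply_lt_getElem _ hnodC1 t (by simpa using hlt2)
                  rw [hfp', hfp, hg2]
                  obtain ⟨y, hy⟩ : ∃ y, (v1 :: t1)[t + 1]'(by simpa using hlt2) = y :=
                    ⟨_, rfl⟩
                  rw [hy]
                  have hyle : (L y : ℕ) ≤ k := hC1le y (hy ▸ List.getElem_mem _)
                  have hyne0 : (L y : ℕ) ≠ 0 := by
                    intro h0
                    have hyv1 : y = v1 := L.injective (by rw [hLv1]; exact Fin.ext h0)
                    have : (v1 :: t1)[t + 1]'(by simpa using hlt2) =
                        (v1 :: t1)[0]'(by simp) := by rw [hy, hyv1]; rfl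
                    have := (hnodC1.getElem_inj_iff).mp this
                    omega
                  rw [toggleRho_apply _ k hkn' (L y), if_neg hyne0,
                    if_pos hyle]
                  exact (Equiv.swap_apply_of_ne_of_ne
                    (Fin.ne_of_val_ne (by simp; omega))
                    (Fin.ne_of_val_ne (by simp; omega))).symm
                · have hteq : t = t1.length := by omega
                  have hg2 : ((v1 :: t1) ++ [w])[t + 1]'(by omega) = w :=
                    List.getElem_concat_length (by simp [hteq]) _
                  have hxlast : x = a := by
                    rw [hxg, ← ha, List.getLast_eq_getElem]
                    simp [hteq]
                  rw [hfp', hg2, hxlast, hfpa, hLv1]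
                  rw [toggleRho_apply _ k hkn', if_pos (by simp), hLwrho]
                  have : (⟨k + 1, hkn⟩ : Fin (Fintype.card P)) =
                      Equiv.swap ⟨k, Nat.lt_of_succ_lt hkn⟩ ⟨k + 1, hkn⟩
                        ⟨k, Nat.lt_of_succ_lt hkn⟩ := by
                    rw [Equiv.swap_apply_left]
                  rw [Equiv.swap_apply_right]
              · have hteq : t = t1.length + 1 := by omega
                have hxw : x = w := by
                  rw [← hxt]
                  exact List.getElem_concat_length (by simp [hteq]) _
                rw [hxw, List.formPerm_apply_of_notMem hwC1, hLwrho]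
                have hfp2 : List.formPerm ((v1 :: t1) ++ [w]) w = v1 := by
                  rw [List.cons_append]
                  exact List.formPerm_cons_concat_apply_last v1 w t1
                rw [hfp2, hLv1, toggleRho_apply _ k hkn', if_pos (by simp),
                  Equiv.swap_apply_left]
            · have hx1 : x ∉ (v1 :: t1) := fun h => hxC (List.mem_append_left _ h)
              rw [List.formPerm_apply_of_notMem hx1,
                List.formPerm_apply_of_notMem hxC]
              refine (Equiv.swap_apply_of_ne_of_ne ?_ ?_).symm
              · intro h
                have h0 : toggleRho (Fintype.card P) k (L v1) =
                    ⟨k, Nat.lt_of_succ_lt hkn⟩ := by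
                  rw [hLv1, toggleRho_apply _ k hkn']
                  simp
                have : x = v1 :=
                  L.injective ((toggleRho (Fintype.card P) k).injective
                    (h.trans h0.symm))
                subst this
                exact hx1 (List.mem_cons_self)
              · intro h
                have : x = w :=
                  L.injective ((toggleRho (Fintype.card P) k).injective
                    (h.trans hLwrho.symm))
                subst this
                exact hxC (List.mem_append_right _ (List.mem_singleton_self _))
        · rw [if_neg hcmp]
          refine ⟨v1 :: t1, C2, hsplit, by simp, ?_, ?_, ?_⟩
          · intro x hx
            exact le_trans (hC1le x hx) (by omega)
          · intro x hx
            have h2 := hC2gt x hx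
            have hne : (L x : ℕ) ≠ k + 1 := by
              intro he
              have hxw : x = w := L.injective (by rw [hLw]; exact Fin.ext he)
              rw [hxw] at hx
              have hpair' := hsplit ▸ hpair
              exact hcmp ((List.pairwise_append.mp hpair').2.2 a
                (ha ▸ List.getLast_mem (List.cons_ne_nil v1 t1)) w hx)
            omega
          · rw [hrho1, ← Equiv.trans_assoc]
    obtain ⟨C1, C2, hsplit, hC1ne, _, hC2gt, hM⟩ := key (Fintype.card P - 1) le_rfl
    have hC2nil : C2 = [] := by
      cases C2 with
      | nil => rfl
      | cons b t =>
        have h1 := hC2gt b (List.mem_cons_self)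
        have h2 := (L b).isLt
        omega
    subst hC2nil
    rw [List.append_nil] at hsplit
    rw [← hsplit] at hM
    rw [promote, dif_pos hP, hv1, hM, toggleRho_eq_finRotate_symm _ hn]

end
end

section
/- Let L be a labeling of an n-element poset P that is not a linear extension. Let F_0 be the set of elements of P that are frozen with respect to L, and let F_1 be the set of elements of P that are frozen with respect to ∂(L). Then F_0 is a proper subset of F_1. -/
open scoped Classical

noncomputable section

variable {P : Type*} [Fintype P] [PartialOrder P]

/-! ### Auxiliary lemmas for Statement 1 -/

section Aux1

lemma lSucc_min (L : Labeling P) (v : P)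
    (h : (Finset.univ.filter fun y => v < y).Nonempty) :
    ∀ z, v < z → L (lSucc L v h) ≤ L z := by
  intro z hz
  have hval : L (lSucc L v h)
      = ((Finset.univ.filter fun y => v < y).image L).min' (h.image _) := by
    unfold lSucc; rw [Equiv.apply_symm_apply]
  rw [hval]
  exact Finset.min'_le _ _ (Finset.mem_image_of_mem _ (by simp [hz]))

/-- The relation holding between consecutive elements of the promotion chain. -/
def chainRel (L : Labeling P) (x y : P) : Prop := x < y ∧ ∀ z, x < z → L y ≤ L z

lemma promChainFrom_spec (L : Labeling P) (v : P) :
    ∃ t : List P, promChainFrom L v = v :: t ∧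
      List.Chain' (chainRel L) (v :: t) ∧
      ∀ z, ¬ ((v :: t).getLast (List.cons_ne_nil v t) < z) := by
  induction v using promChainFrom.induct L with
  | case1 v h ih =>
    obtain ⟨t', hEq, hchain, hlast⟩ := ih
    refine ⟨lSucc L v h :: t', ?_, ?_, ?_⟩
    · rw [promChainFrom, dif_pos h, hEq]
    · rw [List.Chain', List.isChain_cons_cons]
      exact ⟨⟨lt_lSucc L v h, lSucc_min L v h⟩, hchain⟩
    · intro z
      rw [List.getLast_cons (List.cons_ne_nil _ _)]
      exact hlast z
  | case2 v h =>
    refine ⟨[], by rw [promChainFrom, dif_neg h], List.isChain_singleton _, ?_⟩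
    intro z hz
    simp only [List.getLast_singleton] at hz
    exact h ⟨z, by simp [hz]⟩

lemma rot_symm_val {n : ℕ} (hn : 2 ≤ n) (ℓ : Fin n) :
    (((finRotate n).symm ℓ) : ℕ) = if (ℓ : ℕ) = 0 then n - 1 else (ℓ : ℕ) - 1 := by
  obtain ⟨m, rfl⟩ : ∃ m, n = m + 2 := ⟨n - 2, by omega⟩
  have h : (finRotate (m + 2)).symm ℓ = ℓ - 1 := by
    rw [Equiv.symm_apply_eq, finRotate_succ_apply, sub_add_cancel]
  rw [h, Fin.coe_sub_one]
  by_cases h0 : ℓ = 0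
  · simp [h0]
  · rw [if_neg h0, if_neg (fun hv => h0 (Fin.ext (by simpa using hv)))]

/-- The defining set of `frozenA`. -/
def frozenASet (L : Labeling P) : Set ℕ :=
  {a : ℕ | a ≤ Fintype.card P ∧
    ∀ j, Fintype.card P - a + 1 ≤ j → j ≤ Fintype.card P →
      IsUpperSet {x : P | j ≤ labelOf L x ∧ labelOf L x ≤ Fintype.card P}}

lemma frozenA_eq_sSup (L : Labeling P) : frozenA L = sSup (frozenASet L) := rfl

lemma zero_mem_frozenASet (L : Labeling P) : 0 ∈ frozenASet L := by
  refine ⟨Nat.zero_le _, fun j hj1 hj2 => ?_⟩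
  omega

lemma frozenASet_bddAbove (L : Labeling P) : BddAbove (frozenASet L) :=
  ⟨Fintype.card P, fun a ha => ha.1⟩

lemma frozenA_mem (L : Labeling P) : frozenA L ∈ frozenASet L :=
  Nat.sSup_mem ⟨0, zero_mem_frozenASet L⟩ (frozenASet_bddAbove L)

lemma le_frozenA {L : Labeling P} {a : ℕ} (ha : a ∈ frozenASet L) : a ≤ frozenA L :=
  le_csSup (frozenASet_bddAbove L) ha

lemma labelOf_le (L : Labeling P) (x : P) : labelOf L x ≤ Fintype.card P := (L x).isLt

lemma one_le_labelOf (L : Labeling P) (x : P) : 1 ≤ labelOf L x := Nat.le_add_left _ _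

lemma frozen_label_mono (L : Labeling P) {x y : P} (hxy : x ≤ y)
    (hx : Fintype.card P - frozenA L + 1 ≤ labelOf L x) : labelOf L x ≤ labelOf L y :=
  ((frozenA_mem L).2 (labelOf L x) hx (labelOf_le L x) hxy ⟨le_refl _, labelOf_le L x⟩).1

lemma frozenA_ne_card {L : Labeling P} (h : ¬ IsLinearExt L) :
    frozenA L ≠ Fintype.card P := by
  intro he
  apply h
  intro x y hxy
  have hx : Fintype.card P - frozenA L + 1 ≤ labelOf L x := by
    rw [he]; have := one_le_labelOf L x; omega
  have := frozen_label_mono L hxy hx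
  rw [Fin.le_def]
  unfold labelOf at this
  omega

lemma ncard_label_ge (L : Labeling P) (b : ℕ) :
    {x : P | b + 1 ≤ labelOf L x}.ncard = Fintype.card P - b := by
  have hset : {x : P | b + 1 ≤ labelOf L x}
      = ⇑L ⁻¹' {i : Fin (Fintype.card P) | b ≤ (i : ℕ)} := by
    ext x
    simp only [Set.mem_setOf_eq, Set.mem_preimage, labelOf]
    omega
  rw [hset, ← Set.ncard_image_of_injective _ L.injective,
    Set.image_preimage_eq _ L.surjective]
  by_cases hb : b < Fintype.card P
  · have hIci : {i : Fin (Fintype.card P) | b ≤ (i : ℕ)}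
        = ↑(Finset.Ici (⟨b, hb⟩ : Fin (Fintype.card P))) := by
      ext i
      simp [Fin.le_def]
    rw [hIci, Set.ncard_coe_finset, Fin.card_Ici]
  · have hemp : {i : Fin (Fintype.card P) | b ≤ (i : ℕ)} = ∅ := by
      ext i
      simp only [Set.mem_setOf_eq, Set.mem_empty_iff_false, iff_false, not_le]
      exact lt_of_lt_of_le i.isLt (by omega)
    rw [hemp, Set.ncard_empty]
    omega

end Aux1

/-- If `L` is not a linear extension, then the set of elements frozen
with respect to `L` is a proper subset of the set of elements frozen with respect
to `∂(L)`. -/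
theorem frozen_ssubset_frozen_promote (L : Labeling P) (h : ¬ IsLinearExt L) :
    {x : P | IsFrozen L x} ⊂ {x : P | IsFrozen (promote L) x} := by
  classical
  have hNL := h
  rw [IsLinearExt] at h
  push_neg at h
  obtain ⟨x0, y0, hxy0, hL0⟩ := h
  have hP : Nonempty P := ⟨x0⟩
  have hn2 : 2 ≤ Fintype.card P := by
    have hne : x0 ≠ y0 := fun he => absurd hL0 (by rw [he]; exact lt_irrefl _)
    have : Nontrivial P := ⟨x0, y0, hne⟩
    exact Fintype.one_lt_card
  set a := frozenA L with ha
  have haS := frozenA_mem L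
  have han : a < Fintype.card P := lt_of_le_of_ne haS.1 (frozenA_ne_card hNL)
  -- the promotion chain
  set v₁ : P := L.symm ⟨0, @Fintype.card_pos P _ hP⟩ with hv₁
  obtain ⟨t, hCt, hchain, hlastmax⟩ := promChainFrom_spec L v₁
  have hlt : List.Chain' (· < ·) (v₁ :: t) := hchain.imp (fun _ _ h => h.1)
  have hpw : List.Pairwise (· < ·) (v₁ :: t) := List.isChain_iff_pairwise.mp hlt
  have hnd : (v₁ :: t).Nodup := hpw.imp (fun h => ne_of_lt h)
  set vm : P := (v₁ :: t).getLast (List.cons_ne_nil v₁ t) with hvm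
  have hLv₁ : (L v₁ : ℕ) = 0 := by rw [hv₁, Equiv.apply_symm_apply]
  have hinjv₁ : ∀ x : P, (L x : ℕ) = 0 → x = v₁ := by
    intro x hx
    apply L.injective
    apply Fin.ext
    rw [hx, hLv₁]
  -- the label formula
  have hform : ∀ x : P, labelOf (promote L) x
      = ((finRotate (Fintype.card P)).symm (L (List.formPerm (v₁ :: t) x)) : ℕ) + 1 := by
    intro x
    rw [labelOf, promote, dif_pos hP, ← hv₁, hCt]
    rfl
  have hrot := rot_symm_val hn2
  -- label of the last element of the chain
  have hvm_lab : labelOf (promote L) vm = Fintype.card P := by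
    rw [hform vm, hvm, List.formPerm_apply_getLast v₁ t, hrot, if_pos hLv₁]
    omega
  -- labels off the chain
  have hoff : ∀ x : P, x ∉ (v₁ :: t) →
      labelOf (promote L) x + 1 = labelOf L x ∧ 2 ≤ labelOf L x := by
    intro x hx
    have h0 : (L x : ℕ) ≠ 0 := fun h0 => hx (by rw [hinjv₁ x h0]; exact List.mem_cons_self)
    rw [hform x, List.formPerm_apply_of_notMem hx, hrot, if_neg h0]
    unfold labelOf
    omega
  -- labels on the chain (other than the last element)
  have hon : ∀ x : P, x ∈ (v₁ :: t) → x ≠ vm →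
      ∃ s : P, x < s ∧ (∀ z, x < z → labelOf L s ≤ labelOf L z) ∧
        labelOf (promote L) x + 1 = labelOf L s := by
    intro x hx hx1
    obtain ⟨i, hi, hxi⟩ := List.mem_iff_getElem.mp hx
    have hi1 : i + 1 < (v₁ :: t).length := by
      by_contra hcon
      apply hx1
      have hieq : i = (v₁ :: t).length - 1 := by
        simp only [List.length_cons] at hi hcon ⊢
        omega
      rw [← hxi, hvm, List.getLast_eq_getElem]
      congr 1
    have hrel : chainRel L ((v₁ :: t)[i]) ((v₁ :: t)[i + 1]) := by
      have := List.isChain_iff_getElem.mp hchain i (by simp only [List.length_cons] at hi1 ⊢; omega)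
      simpa [List.get_eq_getElem] using this
    refine ⟨(v₁ :: t)[i + 1], hxi ▸ hrel.1, ?_, ?_⟩
    · intro z hz
      have hle := hrel.2 z (hxi ▸ hz)
      rw [Fin.le_def] at hle
      unfold labelOf
      omega
    · have hne0 : (L ((v₁ :: t)[i + 1]) : ℕ) ≠ 0 := by
        intro h0
        have he : (v₁ :: t)[i + 1] = v₁ := hinjv₁ _ h0
        have hltv : (v₁ :: t)[0] < (v₁ :: t)[i + 1] :=
          List.pairwise_iff_getElem.mp hpw 0 (i + 1) (by simp) hi1 (Nat.succ_pos i)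
        rw [he] at hltv
        exact absurd hltv (lt_irrefl _)
      rw [hform x, ← hxi, List.formPerm_apply_lt_getElem _ hnd i hi1, hrot, if_neg hne0]
      unfold labelOf
      omega
  -- key step: labels at least j + 1 map to labels at least j
  have hB : ∀ j, Fintype.card P - a ≤ j → ∀ y : P, j + 1 ≤ labelOf L y →
      j ≤ labelOf (promote L) y := by
    intro j hj y hy
    by_cases hy1 : y = vm
    · rw [hy1, hvm_lab]
      have := labelOf_le L y
      omega
    by_cases hy2 : y ∈ (v₁ :: t)
    · obtain ⟨s, hys, hmin, hlab⟩ := hon y hy2 hy1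
      have h1 : labelOf L y ≤ labelOf L s :=
        frozen_label_mono L (le_of_lt hys) (by omega)
      have h2 := hmin s hys
      omega
    · obtain ⟨h1, h2⟩ := hoff y hy2
      omega
  -- the upper-set property for promoted labels
  have hupper : ∀ j, Fintype.card P - a ≤ j →
      IsUpperSet {x : P | j ≤ labelOf (promote L) x ∧
        labelOf (promote L) x ≤ Fintype.card P} := by
    intro j hj x y hxy hx
    rcases eq_or_lt_of_le hxy with rfl | hlt2
    · exact hx
    refine ⟨?_, labelOf_le (promote L) y⟩
    by_cases hx1 : x = vm
    · exact absurd hlt2 (hx1 ▸ hlastmax y)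
    have hy' : j + 1 ≤ labelOf L y := by
      by_cases hx2 : x ∈ (v₁ :: t)
      · obtain ⟨s, hxs, hmin, hlab⟩ := hon x hx2 hx1
        have h1 := hmin y hlt2
        have h2 := hx.1
        omega
      · obtain ⟨h1, h2⟩ := hoff x hx2
        have hx3 : j + 1 ≤ labelOf L x := by
          have := hx.1
          omega
        have := frozen_label_mono L (le_of_lt hlt2) (by omega)
        omega
    exact hB j hj y hy'
  -- a + 1 is admissible for the promoted labeling
  have ha1S : (a + 1) ∈ frozenASet (promote L) := by
    refine ⟨by omega, fun j hj1 hj2 => hupper j (by omega)⟩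
  have ha1 : a + 1 ≤ frozenA (promote L) := le_frozenA ha1S
  have haP_le := (frozenA_mem (promote L)).1
  -- the subset relation
  have hsub : {x : P | IsFrozen L x} ⊆ {x : P | IsFrozen (promote L) x} := by
    intro x hx
    have hx' : Fintype.card P - a + 1 ≤ labelOf L x := hx
    have h1 : Fintype.card P - a ≤ labelOf (promote L) x :=
      hB (Fintype.card P - a) le_rfl x hx'
    show Fintype.card P - frozenA (promote L) + 1 ≤ labelOf (promote L) x
    omega
  -- cardinality comparison
  have hc0 : {x : P | IsFrozen L x}.ncard = a := by
    have he : {x : P | IsFrozen L x}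
        = {x : P | (Fintype.card P - a) + 1 ≤ labelOf L x} := rfl
    rw [he, ncard_label_ge]
    omega
  have hGsub : {x : P | (Fintype.card P - a - 1) + 1 ≤ labelOf (promote L) x}
      ⊆ {x : P | IsFrozen (promote L) x} := by
    intro x hx
    have hx' : (Fintype.card P - a - 1) + 1 ≤ labelOf (promote L) x := hx
    show Fintype.card P - frozenA (promote L) + 1 ≤ labelOf (promote L) x
    omega
  have hc1 : {x : P | (Fintype.card P - a - 1) + 1 ≤ labelOf (promote L) x}.ncard
      = a + 1 := by
    rw [ncard_label_ge]
    omega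
  refine HasSubset.Subset.ssubset_of_ne hsub ?_
  intro heq
  have hcard : a + 1 ≤ {x : P | IsFrozen (promote L) x}.ncard := by
    rw [← hc1]
    exact Set.ncard_le_ncard hGsub (Set.toFinite _)
  rw [← heq, hc0] at hcard
  omega

end
end

section
/- Let P be an n-element poset, L a labeling of P, and write L_γ = ∂^γ(L). For all γ, j ∈ {1,…,n} with j + γ ≤ n, the elements L⁻¹(j+γ) and L_γ⁻¹(j) belong to the same connected component of P. -/
open scoped Classical

noncomputable section

variable {P : Type*} [Fintype P] [PartialOrder P]

lemma promChainFrom_head? (L : Labeling P) (v : P) :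
    (promChainFrom L v).head? = some v := by
  rw [promChainFrom]; split <;> rfl

lemma promChainFrom_chain'_s7 (L : Labeling P) (v : P) :
    (promChainFrom L v).Chain' (· < ·) := by
  rw [promChainFrom]
  split
  · next h =>
    unfold List.Chain'
    rw [List.isChain_cons]
    refine ⟨?_, promChainFrom_chain'_s7 L _⟩
    intro y hy
    rw [promChainFrom_head?] at hy
    cases hy
    exact lt_lSucc L v h
  · exact List.isChain_singleton v
termination_by (Finset.univ.filter fun y => v < y).card
decreasing_by
  rename_i h
  apply Finset.card_lt_card
  refine (Finset.ssubset_iff_of_subset ?_).mpr ?_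
  · intro z hz
    simp only [Finset.mem_filter, Finset.mem_univ, true_and] at *
    exact lt_trans (lt_lSucc L v h) hz
  · exact ⟨lSucc L v h, by simp [lt_lSucc L v h], by simp⟩

lemma reachable_of_mem_chain {l : List P} (hc : l.Chain' (· < ·))
    {x y : P} (hx : x ∈ l) (hy : y ∈ l) : (compGraph P).Reachable x y := by
  by_cases hxy : x = y
  · subst hxy; rfl
  · have hp : l.Pairwise (fun a b => a < b ∨ b < a) :=
      (List.isChain_iff_pairwise.mp hc).imp Or.inl
    have hsym : Symmetric (fun a b : P => a < b ∨ b < a) := fun a b h => h.symm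
    have := (haveI : Std.Symm (fun a b : P => a < b ∨ b < a) := ⟨fun a b h => hsym h⟩; hp.forall hx hy hxy)
    exact SimpleGraph.Adj.reachable ⟨hxy, this.imp le_of_lt le_of_lt⟩

lemma finRotate_eq {n : ℕ} (i : ℕ) (h : i + 1 < n) :
    finRotate n ⟨i, by omega⟩ = ⟨i + 1, h⟩ := by
  cases n with
  | zero => omega
  | succ m =>
    rw [finRotate_succ_apply]
    ext
    simp [Fin.add_def]
    omega

lemma promote_step (M : Labeling P) (j : ℕ) (h1 : 1 ≤ j)
    (h2 : j + 1 ≤ Fintype.card P) :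
    (compGraph P).Reachable (M.symm ⟨j, by omega⟩)
      ((promote M).symm ⟨j - 1, by omega⟩) := by
  have hne : Nonempty P := ⟨M.symm ⟨j, by omega⟩⟩
  rw [promote, dif_pos hne]
  simp only [Equiv.symm_trans_apply, Equiv.symm_symm]
  have hrot : finRotate (Fintype.card P) ⟨j - 1, by omega⟩ = ⟨j, by omega⟩ := by
    have := finRotate_eq (n := Fintype.card P) (j - 1) (by omega)
    convert this using 2 <;> omega
  rw [hrot]
  set c := promChainFrom M (M.symm ⟨0, Fintype.card_pos⟩) with hc
  set x := M.symm ⟨j, by omega⟩ with hx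
  by_cases hxc : x ∈ c
  · have hy : (c.formPerm).symm x ∈ c := by
      apply List.mem_of_formPerm_apply_mem
      rwa [Equiv.apply_symm_apply]
    exact reachable_of_mem_chain (promChainFrom_chain'_s7 M _) hxc hy
  · have : c.formPerm x = x := List.formPerm_apply_of_notMem hxc
    have : (c.formPerm).symm x = x := by
      conv_lhs => rw [← this]
      exact Equiv.symm_apply_apply _ _
    rw [this]

/-- For `γ, j ∈ {1, …, n}` with `j + γ ≤ n`, the elements
`L⁻¹(j+γ)` and `(∂^γ L)⁻¹(j)` lie in the same connected component of `P`
(i.e. are reachable from one another in the comparability graph). -/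
theorem same_component (L : Labeling P) (γ j : ℕ) (hj : 1 ≤ j)
    (hjγ : j + γ ≤ Fintype.card P) :
    (compGraph P).Reachable (L.symm ⟨j + γ - 1, by omega⟩)
      ((promote^[γ] L).symm ⟨j - 1, by omega⟩) := by
  induction γ generalizing j with
  | zero =>
    simp only [Function.iterate_zero, id_eq, Nat.add_zero]
    exact SimpleGraph.Reachable.refl _
  | succ γ ih =>
    have h1 : (⟨j + (γ + 1) - 1, by omega⟩ : Fin (Fintype.card P)) =
        ⟨(j + 1) + γ - 1, by omega⟩ := by simp only [Fin.mk.injEq]; omega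
    rw [h1, Function.iterate_succ_apply']
    exact (ih (j + 1) (by omega) (by omega)).trans
      (promote_step (promote^[γ] L) j hj (by omega))

end
end
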